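/- Let (b,c,d) be a triad in the real Cayley–Dickson algebra 𝔸ₙ (all εᵢ = 1) and set a := (b·c)·d. Then the associators within each of the following three groups are simultaneously zero or simultaneously nonzero: Type 1 group {[b,a,c], [b,d,c], [a,b,d], [a,c,d]}; Type 2 group {[a,b,c], [b,c,d], [b,a,d], [a,d,c]}; Type 3 group {[a,c,b], [c,b,d], [a,d,b], [c,a,d]}. -/

import Mathlib

noncomputable section

/-- The real Cayley–Dickson algebra carrier: `CD 0 = ℝ`, `CD (n+1) = CD n × CD n`. -/
def CD : ℕ → Type
  | 0 => ℝ
  | n + 1 => CD n × CD n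

instance CD.instAddCommGroup : (n : ℕ) → AddCommGroup (CD n)
  | 0 => inferInstanceAs (AddCommGroup ℝ)
  | n + 1 =>
    letI := CD.instAddCommGroup n
    inferInstanceAs (AddCommGroup (CD n × CD n))

instance CD.instModule : (n : ℕ) → Module ℝ (CD n)
  | 0 => inferInstanceAs (Module ℝ ℝ)
  | n + 1 =>
    letI := CD.instModule n
    inferInstanceAs (Module ℝ (CD n × CD n))

/-- The unit of the Cayley–Dickson algebra. -/
def CD.one : (n : ℕ) → CD n
  | 0 => (1 : ℝ)
  | n + 1 => (CD.one n, 0)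

/-- Conjugation: `(a, b)* = (a*, -b)`, identity on `ℝ`. -/
def CD.conj : (n : ℕ) → CD n → CD n
  | 0, a => a
  | n + 1, x => (CD.conj n x.1, -x.2)

/-- Cayley–Dickson multiplication with sign vector `ε`:
`(a,b)·(c,d) = (a·c − ε (n+1) • (d*·b), d·a + b·c*)`. -/
def CD.mul (ε : ℕ → ℝ) : (n : ℕ) → CD n → CD n → CD n
  | 0, a, c => (show ℝ from a) * (show ℝ from c)
  | n + 1, x, y =>
    (CD.mul ε n x.1 y.1 - ε (n + 1) • CD.mul ε n (CD.conj n y.2) x.2,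
     CD.mul ε n y.2 x.1 + CD.mul ε n x.2 (CD.conj n y.1))

/-- The standard basis element `e α` of `CD n`, for `α ⊆ {1,…,n}`. -/
def CD.basis : (n : ℕ) → Finset ℕ → CD n
  | 0, _ => (1 : ℝ)
  | n + 1, α =>
    if n + 1 ∈ α then ((0 : CD n), CD.basis n (α.erase (n + 1)))
    else (CD.basis n α, (0 : CD n))

/-- `α` indexes a pure basis element of `CD n`. -/
def CD.IsPure (n : ℕ) (α : Finset ℕ) : Prop :=
  α.Nonempty ∧ α ⊆ Finset.Icc 1 n

/-- The associator `[x,y,z] = (x·y)·z − x·(y·z)`. -/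
def CD.assoc (ε : ℕ → ℝ) (n : ℕ) (x y z : CD n) : CD n :=
  CD.mul ε n (CD.mul ε n x y) z - CD.mul ε n x (CD.mul ε n y z)

/-- A triad: indices of three pairwise distinct pure basis elements `b, c, d`
with `d ≠ ±(b·c)` (all signs `εᵢ = 1`). -/
def CD.IsTriad (n : ℕ) (α β γ : Finset ℕ) : Prop :=
  CD.IsPure n α ∧ CD.IsPure n β ∧ CD.IsPure n γ ∧
  α ≠ β ∧ α ≠ γ ∧ β ≠ γ ∧
  CD.basis n γ ≠ CD.mul (fun _ => 1) n (CD.basis n α) (CD.basis n β) ∧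
  CD.basis n γ ≠ -CD.mul (fun _ => 1) n (CD.basis n α) (CD.basis n β)

/-- Multiplication with all signs `εᵢ = 1`. -/
abbrev CD.mul1 (n : ℕ) : CD n → CD n → CD n := CD.mul (fun _ => 1) n

/-- Associator with all signs `εᵢ = 1`. -/
abbrev CD.assoc1 (n : ℕ) : CD n → CD n → CD n → CD n := CD.assoc (fun _ => 1) n

namespace CD

lemma conj_zero : ∀ n, CD.conj n (0 : CD n) = 0
  | 0 => rfl
  | n+1 => by
      show ((CD.conj n (0:CD n), -(0:CD n)) : CD n × CD n) = ((0,0) : CD n × CD n)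
      rw [conj_zero n, neg_zero]

lemma conj_smul : ∀ n (r : ℝ) (x : CD n), CD.conj n (r • x) = r • CD.conj n x
  | 0, r, x => rfl
  | n+1, r, x => by
      show ((CD.conj n (r • x.1), -(r • x.2)) : CD n × CD n)
        = ((r • CD.conj n x.1, r • -x.2) : CD n × CD n)
      rw [conj_smul n, smul_neg]

mutual

lemma mul_zero_right (ε : ℕ → ℝ) : ∀ n (x : CD n), CD.mul ε n x 0 = 0
  | 0, x => mul_zero (show ℝ from x)
  | n+1, x => by
      show ((CD.mul ε n x.1 0 - ε (n+1) • CD.mul ε n (CD.conj n (0:CD n)) x.2,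
        CD.mul ε n (0:CD n) x.1 + CD.mul ε n x.2 (CD.conj n (0:CD n))) : CD n × CD n) = 0
      rw [conj_zero n, mul_zero_right ε n, mul_zero_right ε n, mul_zero_left ε n,
        mul_zero_left ε n]
      show ((0 - ε (n+1) • (0:CD n), 0 + (0:CD n)) : CD n × CD n) = ((0,0) : CD n × CD n)
      rw [smul_zero, sub_zero, add_zero]

lemma mul_zero_left (ε : ℕ → ℝ) : ∀ n (x : CD n), CD.mul ε n 0 x = 0
  | 0, x => zero_mul (show ℝ from x)
  | n+1, x => by
      show ((CD.mul ε n (0:CD n) x.1 - ε (n+1) • CD.mul ε n (CD.conj n x.2) (0:CD n),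
        CD.mul ε n x.2 (0:CD n) + CD.mul ε n (0:CD n) (CD.conj n x.1)) : CD n × CD n) = 0
      rw [mul_zero_left ε n, mul_zero_left ε n, mul_zero_right ε n, mul_zero_right ε n]
      show ((0 - ε (n+1) • (0:CD n), 0 + (0:CD n)) : CD n × CD n) = ((0,0) : CD n × CD n)
      rw [smul_zero, sub_zero, add_zero]

end

mutual

lemma mul_smul_left (ε : ℕ → ℝ) : ∀ n (r : ℝ) (x y : CD n),
    CD.mul ε n (r • x) y = r • CD.mul ε n x y
  | 0, r, x, y => by
      show (r * (show ℝ from x)) * (show ℝ from y)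
        = r * ((show ℝ from x) * (show ℝ from y))
      ring
  | n+1, r, x, y => by
      show ((CD.mul ε n (r • x.1) y.1 - ε (n+1) • CD.mul ε n (CD.conj n y.2) (r • x.2),
        CD.mul ε n y.2 (r • x.1) + CD.mul ε n (r • x.2) (CD.conj n y.1)) : CD n × CD n)
        = r • ((CD.mul ε n x.1 y.1 - ε (n+1) • CD.mul ε n (CD.conj n y.2) x.2,
        CD.mul ε n y.2 x.1 + CD.mul ε n x.2 (CD.conj n y.1)) : CD n × CD n)
      rw [mul_smul_left ε n, mul_smul_left ε n, mul_smul_right ε n, mul_smul_right ε n]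
      show (_ , _) = ((r • _, r • _) : CD n × CD n)
      rw [smul_sub, smul_add, smul_comm (ε (n+1)) r]

lemma mul_smul_right (ε : ℕ → ℝ) : ∀ n (r : ℝ) (x y : CD n),
    CD.mul ε n x (r • y) = r • CD.mul ε n x y
  | 0, r, x, y => by
      show (show ℝ from x) * (r * (show ℝ from y))
        = r * ((show ℝ from x) * (show ℝ from y))
      ring
  | n+1, r, x, y => by
      show ((CD.mul ε n x.1 (r • y.1) - ε (n+1) • CD.mul ε n (CD.conj n (r • y.2)) x.2,
        CD.mul ε n (r • y.2) x.1 + CD.mul ε n x.2 (CD.conj n (r • y.1))) : CD n × CD n)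
        = r • ((CD.mul ε n x.1 y.1 - ε (n+1) • CD.mul ε n (CD.conj n y.2) x.2,
        CD.mul ε n y.2 x.1 + CD.mul ε n x.2 (CD.conj n y.1)) : CD n × CD n)
      rw [conj_smul, conj_smul, mul_smul_left ε n, mul_smul_left ε n,
        mul_smul_right ε n, mul_smul_right ε n]
      show (_ , _) = ((r • _, r • _) : CD n × CD n)
      rw [smul_sub, smul_add, smul_comm (ε (n+1)) r]

end

lemma basis_ne_zero : ∀ n (α : Finset ℕ), CD.basis n α ≠ 0
  | 0, α => (one_ne_zero : (1:ℝ) ≠ 0)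
  | n+1, α => by
      unfold CD.basis
      by_cases hm : n+1 ∈ α
      · simp only [hm, ↓reduceIte]
        intro h
        exact basis_ne_zero n (α.erase (n+1)) (congrArg Prod.snd h)
      · simp only [hm, ↓reduceIte]
        intro h
        exact basis_ne_zero n α (congrArg Prod.fst h)

end CD
namespace CD
open Finset
open scoped symmDiff

/-- Conjugation sign of a basis element. -/
def csgn (β : Finset ℕ) : ℝ := if β = ∅ then 1 else -1

/-- Sign function: `e_α · e_β = sgn n α β • e_{α ∆ β}` (all εᵢ = 1). -/
def sgn : ℕ → Finset ℕ → Finset ℕ → ℝ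
  | 0, _, _ => 1
  | n+1, α, β =>
    if n+1 ∈ α then
      if n+1 ∈ β then -(csgn (β.erase (n+1)) * sgn n (β.erase (n+1)) (α.erase (n+1)))
      else csgn β * sgn n (α.erase (n+1)) β
    else
      if n+1 ∈ β then sgn n (β.erase (n+1)) α
      else sgn n α β

lemma csgn_sq (β : Finset ℕ) : csgn β * csgn β = 1 := by
  unfold csgn; split <;> norm_num

lemma csgn_ne (β : Finset ℕ) (h : β ≠ ∅) : csgn β = -1 := if_neg h

lemma subset_Icc_of_not_mem {n : ℕ} {β : Finset ℕ} (h : β ⊆ Finset.Icc 1 (n+1))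
    (h2 : n+1 ∉ β) : β ⊆ Finset.Icc 1 n := by
  intro i hi
  have := h hi
  simp only [Finset.mem_Icc] at this ⊢
  refine ⟨this.1, ?_⟩
  rcases Nat.lt_or_ge i (n+1) with h' | h'
  · omega
  · exact absurd (by omega : i = n+1) (fun e => h2 (e ▸ hi))

lemma erase_subset_Icc {n : ℕ} {β : Finset ℕ} (h : β ⊆ Finset.Icc 1 (n+1)) :
    β.erase (n+1) ⊆ Finset.Icc 1 n :=
  subset_Icc_of_not_mem (fun i hi => h (Finset.erase_subset _ _ hi))
    (Finset.notMem_erase _ _)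

lemma conj_basis : ∀ n (β : Finset ℕ), β ⊆ Finset.Icc 1 n →
    CD.conj n (CD.basis n β) = csgn β • CD.basis n β
  | 0, β, h => by
      have hβ : β = ∅ := Finset.subset_empty.1 (by simpa using h)
      subst hβ
      show (1:ℝ) = csgn ∅ * 1
      simp [csgn]
  | n+1, β, h => by
      unfold CD.basis
      by_cases hm : n+1 ∈ β
      · simp only [hm, ↓reduceIte]
        have hβ : β ≠ ∅ := fun e => by simp [e] at hm
        show ((CD.conj n (0:CD n), -(CD.basis n (β.erase (n+1)))) : CD n × CD n)
          = ((csgn β • (0:CD n), csgn β • CD.basis n (β.erase (n+1))) : CD n × CD n)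
        rw [conj_zero n, smul_zero, csgn_ne β hβ, neg_one_smul]
      · simp only [hm, ↓reduceIte]
        show ((CD.conj n (CD.basis n β), -(0:CD n)) : CD n × CD n)
          = ((csgn β • CD.basis n β, csgn β • (0:CD n)) : CD n × CD n)
        rw [conj_basis n β (subset_Icc_of_not_mem h hm), smul_zero, neg_zero]

lemma erase_symmDiff (t : ℕ) (α β : Finset ℕ) :
    (α ∆ β).erase t = (α.erase t) ∆ (β.erase t) := by
  ext i
  simp only [Finset.mem_erase, Finset.mem_symmDiff]
  tauto

lemma mem_symmDiff_left {t : ℕ} {α β : Finset ℕ} (h1 : t ∈ α) (h2 : t ∉ β) :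
    t ∈ α ∆ β := Finset.mem_symmDiff.2 (Or.inl ⟨h1, h2⟩)

lemma mem_symmDiff_right {t : ℕ} {α β : Finset ℕ} (h1 : t ∉ α) (h2 : t ∈ β) :
    t ∈ α ∆ β := Finset.mem_symmDiff.2 (Or.inr ⟨h2, h1⟩)

lemma not_mem_symmDiff_of_mem {t : ℕ} {α β : Finset ℕ} (h1 : t ∈ α) (h2 : t ∈ β) :
    t ∉ α ∆ β := by simp [Finset.mem_symmDiff, h1, h2]

lemma not_mem_symmDiff_of_not_mem {t : ℕ} {α β : Finset ℕ} (h1 : t ∉ α) (h2 : t ∉ β) :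
    t ∉ α ∆ β := by simp [Finset.mem_symmDiff, h1, h2]

lemma basis_succ (n : ℕ) (α : Finset ℕ) :
    CD.basis (n+1) α = if n+1 ∈ α then ((0 : CD n), CD.basis n (α.erase (n+1)))
      else (CD.basis n α, (0 : CD n)) := rfl

lemma sgn_succ (n : ℕ) (α β : Finset ℕ) :
    sgn (n+1) α β =
    if n+1 ∈ α then
      if n+1 ∈ β then -(csgn (β.erase (n+1)) * sgn n (β.erase (n+1)) (α.erase (n+1)))
      else csgn β * sgn n (α.erase (n+1)) β
    else
      if n+1 ∈ β then sgn n (β.erase (n+1)) α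
      else sgn n α β := rfl

lemma mul_succ (ε : ℕ → ℝ) (n : ℕ) (x y : CD (n+1)) :
    CD.mul ε (n+1) x y
      = ((CD.mul ε n x.1 y.1 - ε (n+1) • CD.mul ε n (CD.conj n y.2) x.2,
          CD.mul ε n y.2 x.1 + CD.mul ε n x.2 (CD.conj n y.1)) : CD n × CD n) := rfl

lemma smul_pair (n : ℕ) (r : ℝ) (a b : CD n) :
    (r • ((a, b) : CD n × CD n) : CD (n+1)) = ((r • a, r • b) : CD n × CD n) := rfl

lemma pair_eq_iff (n : ℕ) (a b a' b' : CD n) :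
    (((a, b) : CD n × CD n) : CD (n+1)) = ((a', b') : CD n × CD n) ↔ a = a' ∧ b = b' :=
  Prod.mk.injEq .. ▸ Iff.rfl

lemma basis_mul : ∀ n (α β : Finset ℕ), α ⊆ Finset.Icc 1 n → β ⊆ Finset.Icc 1 n →
    CD.mul (fun _ => (1:ℝ)) n (CD.basis n α) (CD.basis n β) = sgn n α β • CD.basis n (α ∆ β)
  | 0, α, β, hα, hβ => rfl
  | n+1, α, β, hα, hβ => by
      have hae : α.erase (n+1) ⊆ Finset.Icc 1 n := erase_subset_Icc hα
      have hbe : β.erase (n+1) ⊆ Finset.Icc 1 n := erase_subset_Icc hβ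
      by_cases hA : n+1 ∈ α <;> by_cases hB : n+1 ∈ β
      · -- t ∈ α, t ∈ β
        have hsd : n+1 ∉ α ∆ β := not_mem_symmDiff_of_mem hA hB
        have hab : α ∆ β = (α.erase (n+1)) ∆ (β.erase (n+1)) := by
          rw [← erase_symmDiff, Finset.erase_eq_of_notMem hsd]
        rw [basis_succ, basis_succ, basis_succ, if_pos hA, if_pos hB, if_neg hsd,
          sgn_succ, if_pos hA, if_pos hB]
        erw [mul_succ, smul_pair]
        simp only [mul_zero_left, mul_zero_right, conj_zero, smul_zero, zero_sub, zero_add,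
          add_zero, sub_zero, one_smul]
        erw [pair_eq_iff]
        rw [conj_basis n _ hbe, mul_smul_left, basis_mul n _ _ hbe hae]
        rw [hab, symmDiff_comm (α.erase (n+1)) (β.erase (n+1)), smul_smul, neg_smul]
        exact ⟨rfl, rfl⟩
      · -- t ∈ α, t ∉ β
        have hβ' : β ⊆ Finset.Icc 1 n := subset_Icc_of_not_mem hβ hB
        have hsd : n+1 ∈ α ∆ β := mem_symmDiff_left hA hB
        have hab : (α ∆ β).erase (n+1) = (α.erase (n+1)) ∆ β := by
          rw [erase_symmDiff, Finset.erase_eq_of_notMem hB]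
        rw [basis_succ, basis_succ, basis_succ, if_pos hA, if_neg hB, if_pos hsd,
          sgn_succ, if_pos hA, if_neg hB, hab]
        erw [mul_succ, smul_pair]
        simp only [mul_zero_left, mul_zero_right, conj_zero, smul_zero, zero_sub, zero_add,
          add_zero, sub_zero, one_smul, neg_zero]
        erw [pair_eq_iff]
        rw [conj_basis n _ hβ', mul_smul_right, basis_mul n _ _ hae hβ',
          smul_smul]
        exact ⟨rfl, rfl⟩
      · -- t ∉ α, t ∈ β
        have hα' : α ⊆ Finset.Icc 1 n := subset_Icc_of_not_mem hα hA
        have hsd : n+1 ∈ α ∆ β := mem_symmDiff_right hA hB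
        have hab : (α ∆ β).erase (n+1) = α ∆ (β.erase (n+1)) := by
          rw [erase_symmDiff, Finset.erase_eq_of_notMem hA]
        rw [basis_succ, basis_succ, basis_succ, if_neg hA, if_pos hB, if_pos hsd,
          sgn_succ, if_neg hA, if_pos hB, hab]
        erw [mul_succ, smul_pair]
        simp only [mul_zero_left, mul_zero_right, conj_zero, smul_zero, zero_sub, zero_add,
          add_zero, sub_zero, one_smul, neg_zero]
        erw [pair_eq_iff]
        rw [basis_mul n _ _ hbe hα', symmDiff_comm (β.erase (n+1)) α]
        exact ⟨rfl, rfl⟩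
      · -- t ∉ α, t ∉ β
        have hα' : α ⊆ Finset.Icc 1 n := subset_Icc_of_not_mem hα hA
        have hβ' : β ⊆ Finset.Icc 1 n := subset_Icc_of_not_mem hβ hB
        have hsd : n+1 ∉ α ∆ β := not_mem_symmDiff_of_not_mem hA hB
        rw [basis_succ, basis_succ, basis_succ, if_neg hA, if_neg hB, if_neg hsd,
          sgn_succ, if_neg hA, if_neg hB]
        erw [mul_succ, smul_pair]
        simp only [mul_zero_left, mul_zero_right, conj_zero, smul_zero, zero_sub, zero_add,
          add_zero, sub_zero, one_smul, neg_zero]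
        erw [pair_eq_iff]
        rw [basis_mul n _ _ hα' hβ']
        exact ⟨rfl, rfl⟩

end CD
namespace CD
open Finset
open scoped symmDiff

lemma csgn_empty : csgn ∅ = 1 := if_pos rfl

lemma sgn_succ_tt {n : ℕ} {α β : Finset ℕ} (hA : n+1 ∈ α) (hB : n+1 ∈ β) :
    sgn (n+1) α β = -(csgn (β.erase (n+1)) * sgn n (β.erase (n+1)) (α.erase (n+1))) := by
  rw [sgn_succ, if_pos hA, if_pos hB]

lemma sgn_succ_tf {n : ℕ} {α β : Finset ℕ} (hA : n+1 ∈ α) (hB : n+1 ∉ β) :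
    sgn (n+1) α β = csgn β * sgn n (α.erase (n+1)) β := by
  rw [sgn_succ, if_pos hA, if_neg hB]

lemma sgn_succ_ft {n : ℕ} {α β : Finset ℕ} (hA : n+1 ∉ α) (hB : n+1 ∈ β) :
    sgn (n+1) α β = sgn n (β.erase (n+1)) α := by
  rw [sgn_succ, if_neg hA, if_pos hB]

lemma sgn_succ_ff {n : ℕ} {α β : Finset ℕ} (hA : n+1 ∉ α) (hB : n+1 ∉ β) :
    sgn (n+1) α β = sgn n α β := by
  rw [sgn_succ, if_neg hA, if_neg hB]

lemma sgn_empty (n : ℕ) : (∀ β, sgn n ∅ β = 1) ∧ (∀ α, sgn n α ∅ = 1) := by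
  induction n with
  | zero => exact ⟨fun _ => rfl, fun _ => rfl⟩
  | succ n ih =>
    constructor
    · intro β
      by_cases hB : n+1 ∈ β
      · rw [sgn_succ_ft (by simp) hB, ih.2]
      · rw [sgn_succ_ff (by simp) hB, ih.1]
    · intro α
      by_cases hA : n+1 ∈ α
      · rw [sgn_succ_tf hA (by simp), csgn_empty, ih.2, one_mul]
      · rw [sgn_succ_ff hA (by simp), ih.2]

lemma sgn_empty_left (n : ℕ) (β : Finset ℕ) : sgn n ∅ β = 1 := (sgn_empty n).1 β

lemma sgn_empty_right (n : ℕ) (α : Finset ℕ) : sgn n α ∅ = 1 := (sgn_empty n).2 α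

lemma sgn_sq : ∀ (n : ℕ) (α β : Finset ℕ), sgn n α β * sgn n α β = 1
  | 0, α, β => one_mul 1
  | n+1, α, β => by
    by_cases hA : n+1 ∈ α <;> by_cases hB : n+1 ∈ β
    · rw [sgn_succ_tt hA hB]
      have h1 := sgn_sq n (β.erase (n+1)) (α.erase (n+1))
      have h2 := csgn_sq (β.erase (n+1))
      nlinarith [h1, h2]
    · rw [sgn_succ_tf hA hB]
      have h1 := sgn_sq n (α.erase (n+1)) β
      have h2 := csgn_sq β
      nlinarith [h1, h2]
    · rw [sgn_succ_ft hA hB]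
      exact sgn_sq n (β.erase (n+1)) α
    · rw [sgn_succ_ff hA hB]
      exact sgn_sq n α β

lemma sgn_eq_or (n : ℕ) (α β : Finset ℕ) : sgn n α β = 1 ∨ sgn n α β = -1 :=
  mul_self_eq_one_iff.1 (sgn_sq n α β)

lemma sgn_ne_zero (n : ℕ) (α β : Finset ℕ) : sgn n α β ≠ 0 := by
  rcases sgn_eq_or n α β with h | h <;> rw [h] <;> norm_num

-- symmDiff helpers
lemma sd_subset {s α β : Finset ℕ} (hα : α ⊆ s) (hβ : β ⊆ s) : α ∆ β ⊆ s := by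
  intro i hi
  rcases Finset.mem_symmDiff.1 hi with ⟨h, _⟩ | ⟨h, _⟩
  · exact hα h
  · exact hβ h

lemma sd_empty_right (α : Finset ℕ) : α ∆ ∅ = α := by
  ext i; simp [Finset.mem_symmDiff]

lemma sd_empty_left (α : Finset ℕ) : ∅ ∆ α = α := by
  ext i; simp [Finset.mem_symmDiff]

lemma sd_self (α : Finset ℕ) : α ∆ α = ∅ := by
  ext i; simp [Finset.mem_symmDiff]

lemma sd_ne_empty {α β : Finset ℕ} (h : α ≠ β) : α ∆ β ≠ ∅ := by
  intro e
  apply h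
  ext i
  have : i ∈ α ∆ β ↔ i ∈ (∅ : Finset ℕ) := by rw [e]
  simp [Finset.mem_symmDiff] at this
  tauto

lemma eq_empty_of_eq_sd {α β : Finset ℕ} (h : α = α ∆ β) : β = ∅ := by
  ext i
  have : i ∈ α ↔ i ∈ α ∆ β := by rw [← h]
  simp [Finset.mem_symmDiff] at this
  simp
  tauto

lemma eq_empty_of_sd_eq {α β : Finset ℕ} (h : α ∆ β = β) : α = ∅ := by
  ext i
  have : i ∈ α ∆ β ↔ i ∈ β := by rw [h]
  simp [Finset.mem_symmDiff] at this
  simp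
  tauto

/-- The main sign-lemma pack, by induction on `n`:
self-product, anticommutativity, left alternativity, right alternativity. -/
lemma sgn_pack : ∀ n : ℕ,
    (∀ α, α ⊆ Finset.Icc 1 n → sgn n α α = csgn α) ∧
    (∀ α β, α ⊆ Finset.Icc 1 n → β ⊆ Finset.Icc 1 n → α ≠ β → α ≠ ∅ → β ≠ ∅ →
      sgn n α β * sgn n β α = -1) ∧
    (∀ α β, α ⊆ Finset.Icc 1 n → β ⊆ Finset.Icc 1 n → α ≠ ∅ →
      sgn n α β * sgn n α (α ∆ β) = -1) ∧
    (∀ α β, α ⊆ Finset.Icc 1 n → β ⊆ Finset.Icc 1 n → β ≠ ∅ →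
      sgn n α β * sgn n (α ∆ β) β = -1) := by
  intro n
  induction n with
  | zero =>
    have hz : ∀ γ : Finset ℕ, γ ⊆ Finset.Icc 1 0 → γ = ∅ := by
      intro γ h; exact Finset.subset_empty.1 (by simpa using h)
    refine ⟨?_, ?_, ?_, ?_⟩
    · intro α hα; rw [hz α hα]; rfl
    · intro α β hα hβ _ h1 _; exact absurd (hz α hα) h1
    · intro α β hα _ h1; exact absurd (hz α hα) h1
    · intro α β _ hβ h1; exact absurd (hz β hβ) h1
  | succ n ih =>
    obtain ⟨ihQ, ihC, ihL, ihR⟩ := ih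
    -- helper M at level n
    have M : ∀ x y : Finset ℕ, x ⊆ Finset.Icc 1 n → y ⊆ Finset.Icc 1 n → y ≠ ∅ → x ≠ y →
        sgn n x y * sgn n (x ∆ y) x = 1 := by
      intro x y hx hy hy0 hxy
      by_cases hx0 : x = ∅
      · subst hx0
        rw [sgn_empty_left, sd_empty_left, sgn_empty_right]; norm_num
      · have hsub : x ∆ y ⊆ Finset.Icc 1 n := sd_subset hx hy
        have h1 : sgn n x y * sgn n x (x ∆ y) = -1 := ihL x y hx hy hx0
        have h2 : sgn n x (x ∆ y) * sgn n (x ∆ y) x = -1 :=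
          ihC x (x ∆ y) hx hsub (fun e => hy0 (eq_empty_of_eq_sd e)) hx0 (sd_ne_empty hxy)
        have h3 := sgn_sq n x (x ∆ y)
        nlinarith [h1, h2, h3]
    -- helper N at level n
    have N : ∀ x y : Finset ℕ, x ⊆ Finset.Icc 1 n → y ⊆ Finset.Icc 1 n → x ≠ ∅ → y ≠ ∅ →
        x ≠ y → sgn n y x * sgn n x (x ∆ y) = 1 := by
      intro x y hx hy hx0 hy0 hxy
      have h1 : sgn n x y * sgn n y x = -1 := ihC x y hx hy hxy hx0 hy0
      have h2 : sgn n x y * sgn n x (x ∆ y) = -1 := ihL x y hx hy hx0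
      have h3 := sgn_sq n x y
      nlinarith [h1, h2, h3]
    have insert_eq : ∀ {α β : Finset ℕ}, n+1 ∈ α → n+1 ∈ β →
        α.erase (n+1) = β.erase (n+1) → α = β := by
      intro α β hA hB h
      rw [← Finset.insert_erase hA, ← Finset.insert_erase hB, h]
    refine ⟨?_, ?_, ?_, ?_⟩
    · -- Q : sgn α α = csgn α
      intro α hα
      by_cases hA : n+1 ∈ α
      · rw [sgn_succ_tt hA hA, ihQ _ (erase_subset_Icc hα),
          csgn_ne α (fun e => by simp [e] at hA)]
        have := csgn_sq (α.erase (n+1))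
        nlinarith [this]
      · rw [sgn_succ_ff hA hA, ihQ _ (subset_Icc_of_not_mem hα hA)]
    · -- C : anticommutativity
      intro α β hα hβ hne hα0 hβ0
      have hae := erase_subset_Icc hα
      have hbe := erase_subset_Icc hβ
      by_cases hA : n+1 ∈ α <;> by_cases hB : n+1 ∈ β
      · rw [sgn_succ_tt hA hB, sgn_succ_tt hB hA]
        by_cases ha0 : α.erase (n+1) = ∅ <;> by_cases hb0 : β.erase (n+1) = ∅
        · exact absurd (insert_eq hA hB (ha0.trans hb0.symm)) hne
        · rw [ha0, csgn_empty, csgn_ne _ hb0, sgn_empty_left, sgn_empty_right]; norm_num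
        · rw [hb0, csgn_empty, csgn_ne _ ha0, sgn_empty_left, sgn_empty_right]; norm_num
        · have hab : α.erase (n+1) ≠ β.erase (n+1) := fun e => hne (insert_eq hA hB e)
          have h1 := ihC _ _ hae hbe hab ha0 hb0
          rw [csgn_ne _ ha0, csgn_ne _ hb0]
          nlinarith [h1]
      · rw [sgn_succ_tf hA hB, sgn_succ_ft hB hA, csgn_ne β hβ0]
        have := sgn_sq n (α.erase (n+1)) β
        nlinarith [this]
      · rw [sgn_succ_ft hA hB, sgn_succ_tf hB hA, csgn_ne α hα0]
        have := sgn_sq n (β.erase (n+1)) α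
        nlinarith [this]
      · rw [sgn_succ_ff hA hB, sgn_succ_ff hB hA]
        exact ihC α β (subset_Icc_of_not_mem hα hA) (subset_Icc_of_not_mem hβ hB) hne hα0 hβ0
    · -- L : left alternativity
      intro α β hα hβ hα0
      have hae := erase_subset_Icc hα
      have hbe := erase_subset_Icc hβ
      by_cases hA : n+1 ∈ α <;> by_cases hB : n+1 ∈ β
      · -- 11
        have hsd : n+1 ∉ α ∆ β := not_mem_symmDiff_of_mem hA hB
        have hab : α ∆ β = (α.erase (n+1)) ∆ (β.erase (n+1)) := by
          rw [← erase_symmDiff, Finset.erase_eq_of_notMem hsd]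
        rw [sgn_succ_tt hA hB, sgn_succ_tf hA hsd, hab]
        by_cases ha0 : α.erase (n+1) = ∅
        · rw [ha0, sgn_empty_right, sd_empty_left, sgn_empty_left]
          have := csgn_sq (β.erase (n+1))
          nlinarith [this]
        · by_cases hb0 : β.erase (n+1) = ∅
          · rw [hb0, sgn_empty_left, sd_empty_right, csgn_empty,
              ihQ _ hae]
            have := csgn_sq (α.erase (n+1))
            nlinarith [this]
          · by_cases hab0 : α.erase (n+1) = β.erase (n+1)
            · rw [hab0, sd_self, sgn_empty_right, csgn_empty, ihQ _ hbe, csgn_ne _ hb0]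
              norm_num
            · have h1 := N (α.erase (n+1)) (β.erase (n+1)) hae hbe ha0 hb0 hab0
              rw [csgn_ne _ hb0, csgn_ne _ (sd_ne_empty hab0)]
              nlinarith [h1]
      · -- 10
        have hβ' : β ⊆ Finset.Icc 1 n := subset_Icc_of_not_mem hβ hB
        have hsd : n+1 ∈ α ∆ β := mem_symmDiff_left hA hB
        have hab : (α ∆ β).erase (n+1) = (α.erase (n+1)) ∆ β := by
          rw [erase_symmDiff, Finset.erase_eq_of_notMem hB]
        rw [sgn_succ_tf hA hB, sgn_succ_tt hA hsd, hab]
        by_cases hβ0 : β = ∅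
        · rw [hβ0, csgn_empty, sd_empty_right, sgn_empty_right, ihQ _ hae]
          have := csgn_sq (α.erase (n+1))
          nlinarith [this]
        · by_cases haβ : α.erase (n+1) = β
          · rw [haβ, sd_self, csgn_empty, sgn_empty_left, ihQ _ hβ',
              csgn_ne _ hβ0]
            norm_num
          · have h1 := M (α.erase (n+1)) β hae hβ' hβ0 haβ
            rw [csgn_ne _ hβ0, csgn_ne _ (sd_ne_empty haβ)]
            nlinarith [h1]
      · -- 01
        have hα' : α ⊆ Finset.Icc 1 n := subset_Icc_of_not_mem hα hA
        have hsd : n+1 ∈ α ∆ β := mem_symmDiff_right hA hB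
        have hab : (α ∆ β).erase (n+1) = α ∆ (β.erase (n+1)) := by
          rw [erase_symmDiff, Finset.erase_eq_of_notMem hA]
        rw [sgn_succ_ft hA hB, sgn_succ_ft hA hsd, hab,
          symmDiff_comm α (β.erase (n+1))]
        exact ihR (β.erase (n+1)) α hbe hα' hα0
      · -- 00
        have hsd : n+1 ∉ α ∆ β := not_mem_symmDiff_of_not_mem hA hB
        rw [sgn_succ_ff hA hB, sgn_succ_ff hA hsd]
        exact ihL α β (subset_Icc_of_not_mem hα hA) (subset_Icc_of_not_mem hβ hB) hα0
    · -- R : right alternativity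
      intro α β hα hβ hβ0
      have hae := erase_subset_Icc hα
      have hbe := erase_subset_Icc hβ
      by_cases hA : n+1 ∈ α <;> by_cases hB : n+1 ∈ β
      · -- 11
        have hsd : n+1 ∉ α ∆ β := not_mem_symmDiff_of_mem hA hB
        have hab : α ∆ β = (α.erase (n+1)) ∆ (β.erase (n+1)) := by
          rw [← erase_symmDiff, Finset.erase_eq_of_notMem hsd]
        rw [sgn_succ_tt hA hB, sgn_succ_ft hsd hB, hab]
        by_cases hb0 : β.erase (n+1) = ∅
        · rw [hb0, csgn_empty, sgn_empty_left, sd_empty_right, sgn_empty_left]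
          norm_num
        · have h1 := ihL (β.erase (n+1)) (α.erase (n+1)) hbe hae hb0
          rw [csgn_ne _ hb0, symmDiff_comm (α.erase (n+1)) (β.erase (n+1))]
          nlinarith [h1]
      · -- 10
        have hβ' : β ⊆ Finset.Icc 1 n := subset_Icc_of_not_mem hβ hB
        have hsd : n+1 ∈ α ∆ β := mem_symmDiff_left hA hB
        have hab : (α ∆ β).erase (n+1) = (α.erase (n+1)) ∆ β := by
          rw [erase_symmDiff, Finset.erase_eq_of_notMem hB]
        rw [sgn_succ_tf hA hB, sgn_succ_tf hsd hB, hab]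
        have h1 := ihR (α.erase (n+1)) β hae hβ' hβ0
        have h2 := csgn_sq β
        nlinarith [h1, h2]
      · -- 01
        have hα' : α ⊆ Finset.Icc 1 n := subset_Icc_of_not_mem hα hA
        have hsd : n+1 ∈ α ∆ β := mem_symmDiff_right hA hB
        have hab : (α ∆ β).erase (n+1) = α ∆ (β.erase (n+1)) := by
          rw [erase_symmDiff, Finset.erase_eq_of_notMem hA]
        rw [sgn_succ_ft hA hB, sgn_succ_tt hsd hB, hab]
        by_cases hb0 : β.erase (n+1) = ∅
        · rw [hb0, csgn_empty, sgn_empty_left, sd_empty_right, sgn_empty_left]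
          norm_num
        · have h1 := ihL (β.erase (n+1)) α hbe hα' hb0
          rw [csgn_ne _ hb0, symmDiff_comm α (β.erase (n+1))]
          nlinarith [h1]
      · -- 00
        have hsd : n+1 ∉ α ∆ β := not_mem_symmDiff_of_not_mem hA hB
        rw [sgn_succ_ff hA hB, sgn_succ_ff hsd hB]
        exact ihR α β (subset_Icc_of_not_mem hα hA) (subset_Icc_of_not_mem hβ hB) hβ0

end CD
namespace CD
open Finset
open scoped symmDiff

lemma sgn_self {n : ℕ} {α : Finset ℕ} (h : α ⊆ Finset.Icc 1 n) : sgn n α α = csgn α :=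
  (sgn_pack n).1 α h

lemma sgn_anticomm {n : ℕ} {α β : Finset ℕ} (hα : α ⊆ Finset.Icc 1 n)
    (hβ : β ⊆ Finset.Icc 1 n) (hne : α ≠ β) (hα0 : α ≠ ∅) (hβ0 : β ≠ ∅) :
    sgn n α β * sgn n β α = -1 :=
  (sgn_pack n).2.1 α β hα hβ hne hα0 hβ0

lemma sgn_leftalt {n : ℕ} {α β : Finset ℕ} (hα : α ⊆ Finset.Icc 1 n)
    (hβ : β ⊆ Finset.Icc 1 n) (hα0 : α ≠ ∅) :
    sgn n α β * sgn n α (α ∆ β) = -1 :=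
  (sgn_pack n).2.2.1 α β hα hβ hα0

lemma sgn_rightalt {n : ℕ} {α β : Finset ℕ} (hα : α ⊆ Finset.Icc 1 n)
    (hβ : β ⊆ Finset.Icc 1 n) (hβ0 : β ≠ ∅) :
    sgn n α β * sgn n (α ∆ β) β = -1 :=
  (sgn_pack n).2.2.2 α β hα hβ hβ0

lemma eq_of_sd_empty {α β : Finset ℕ} (h : α ∆ β = ∅) : α = β := by
  by_contra h'
  exact sd_ne_empty h' h

lemma eq_neg_of_mul_eq {a b : ℝ} (h : a * b = -1) (hs : a * a = 1) : b = -a := by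
  linear_combination a * h - b * hs

/-- Key transfer lemma: `sgn B (A∆B) = sgn A B`. -/
lemma sgn_T {n : ℕ} {A B : Finset ℕ} (hA : A ⊆ Finset.Icc 1 n) (hB : B ⊆ Finset.Icc 1 n)
    (hA0 : A ≠ ∅) (hB0 : B ≠ ∅) (hAB : A ≠ B) : sgn n B (A ∆ B) = sgn n A B := by
  have h1 := sgn_rightalt hA hB hB0
  have h2 : sgn n (A ∆ B) B * sgn n B (A ∆ B) = -1 :=
    sgn_anticomm (sd_subset hA hB) hB (fun e => hA0 (eq_empty_of_sd_eq e))
      (sd_ne_empty hAB) hB0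
  have e1 : sgn n (A ∆ B) B = -sgn n A B := eq_neg_of_mul_eq h1 (sgn_sq n A B)
  have e2 : sgn n B (A ∆ B) = -sgn n (A ∆ B) B := eq_neg_of_mul_eq h2 (sgn_sq n (A ∆ B) B)
  rw [e2, e1, neg_neg]

/-- The associator coefficient on basis elements. -/
def assocSgn (n : ℕ) (x y z : Finset ℕ) : ℝ :=
  sgn n x y * sgn n (x ∆ y) z - sgn n y z * sgn n x (y ∆ z)

lemma assoc_basis (n : ℕ) (x y z : Finset ℕ) (hx : x ⊆ Finset.Icc 1 n)
    (hy : y ⊆ Finset.Icc 1 n) (hz : z ⊆ Finset.Icc 1 n) :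
    CD.assoc (fun _ => (1:ℝ)) n (CD.basis n x) (CD.basis n y) (CD.basis n z)
      = assocSgn n x y z • CD.basis n ((x ∆ y) ∆ z) := by
  unfold CD.assoc assocSgn
  rw [basis_mul n x y hx hy, mul_smul_left, basis_mul n _ z (sd_subset hx hy) hz,
    basis_mul n y z hy hz, mul_smul_right, basis_mul n x _ hx (sd_subset hy hz),
    smul_smul, smul_smul, ← symmDiff_assoc, sub_smul]

lemma smul_eq_zero_iff₀ {n : ℕ} {r : ℝ} (hr : r ≠ 0) (v : CD n) :
    r • v = 0 ↔ v = 0 := by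
  constructor
  · intro h
    have := congrArg (fun w : CD n => r⁻¹ • w) h
    simpa [smul_smul, inv_mul_cancel₀ hr] using this
  · intro h; rw [h, smul_zero]

lemma assoc_basis_zero_iff (n : ℕ) (x y z : Finset ℕ) (hx : x ⊆ Finset.Icc 1 n)
    (hy : y ⊆ Finset.Icc 1 n) (hz : z ⊆ Finset.Icc 1 n) :
    CD.assoc (fun _ => (1:ℝ)) n (CD.basis n x) (CD.basis n y) (CD.basis n z) = 0
      ↔ assocSgn n x y z = 0 := by
  rw [assoc_basis n x y z hx hy hz]
  constructor
  · intro h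
    by_contra hr
    exact basis_ne_zero n _ ((smul_eq_zero_iff₀ hr _).1 h)
  · intro h; rw [h, zero_smul]

lemma assocSgn_zero_iff_c (n : ℕ) (x y z : Finset ℕ) :
    assocSgn n x y z = 0 ↔
      sgn n x y * sgn n (x ∆ y) z * sgn n y z * sgn n x (y ∆ z) = 1 := by
  have h1 := sgn_sq n x y
  have h2 := sgn_sq n (x ∆ y) z
  have h3 := sgn_sq n y z
  have h4 := sgn_sq n x (y ∆ z)
  unfold assocSgn
  constructor
  · intro h
    nlinarith [h, h1, h2, h3, h4]
  · intro h
    nlinarith [h, h1, h2, h3, h4]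

/-- KD: cyclic shift with symmetric-difference complement. -/
lemma assocSgn_rot {n : ℕ} {x y z w : Finset ℕ}
    (hx : x ⊆ Finset.Icc 1 n) (hy : y ⊆ Finset.Icc 1 n) (hz : z ⊆ Finset.Icc 1 n)
    (hx0 : x ≠ ∅) (hy0 : y ≠ ∅) (hz0 : z ≠ ∅) (hw0 : w ≠ ∅)
    (hxy : x ≠ y) (hyz : y ≠ z) (hw : (x ∆ y) ∆ z = w) :
    (assocSgn n x y z = 0 ↔ assocSgn n y z w = 0) := by
  subst hw
  set w := (x ∆ y) ∆ z with hwdef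
  have hxyz : x ∆ y ≠ z := fun e => hw0 (by rw [hwdef, e, sd_self])
  have hxyz2 : x ≠ y ∆ z := by
    intro e
    exact hw0 (by rw [hwdef, symmDiff_assoc, ← e, sd_self])
  have t1 : sgn n y (x ∆ y) = sgn n x y := sgn_T hx hy hx0 hy0 hxy
  have i_a : z ∆ w = x ∆ y := by
    rw [hwdef]; ext i; simp only [Finset.mem_symmDiff]; tauto
  have t2 : sgn n z w = sgn n (x ∆ y) z :=
    sgn_T (sd_subset hx hy) hz (sd_ne_empty hxy) hz0 hxyz
  have t3 : sgn n (y ∆ z) w = sgn n x (y ∆ z) := by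
    rw [hwdef, symmDiff_assoc]
    exact sgn_T hx (sd_subset hy hz) hx0 (sd_ne_empty hyz) hxyz2
  have key : assocSgn n y z w = -assocSgn n x y z := by
    unfold assocSgn
    rw [i_a, t1, t2, t3]
    ring
  rw [key, neg_eq_zero]

/-- KA: reversal (flexibility on basis elements). -/
lemma assocSgn_rev {n : ℕ} {x y z w : Finset ℕ}
    (hx : x ⊆ Finset.Icc 1 n) (hy : y ⊆ Finset.Icc 1 n) (hz : z ⊆ Finset.Icc 1 n)
    (hx0 : x ≠ ∅) (hy0 : y ≠ ∅) (hz0 : z ≠ ∅) (hw0 : w ≠ ∅)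
    (hxy : x ≠ y) (hyz : y ≠ z) (hw : (x ∆ y) ∆ z = w) :
    (assocSgn n x y z = 0 ↔ assocSgn n z y x = 0) := by
  have hxyz : x ∆ y ≠ z := fun e => hw0 (by rw [← hw, e, sd_self])
  have hxyz2 : x ≠ y ∆ z := by
    intro e
    exact hw0 (by rw [← hw, symmDiff_assoc, ← e, sd_self])
  have n1 : sgn n z y = -sgn n y z :=
    eq_neg_of_mul_eq (sgn_anticomm hy hz hyz hy0 hz0) (sgn_sq n y z)
  have n2 : sgn n y x = -sgn n x y :=
    eq_neg_of_mul_eq (sgn_anticomm hx hy hxy hx0 hy0) (sgn_sq n x y)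
  have n3 : sgn n (y ∆ z) x = -sgn n x (y ∆ z) :=
    eq_neg_of_mul_eq
      (sgn_anticomm hx (sd_subset hy hz) hxyz2 hx0 (sd_ne_empty hyz))
      (sgn_sq n x (y ∆ z))
  have n4 : sgn n z (x ∆ y) = -sgn n (x ∆ y) z :=
    eq_neg_of_mul_eq
      (sgn_anticomm (sd_subset hx hy) hz hxyz (sd_ne_empty hxy) hz0)
      (sgn_sq n (x ∆ y) z)
  have key : assocSgn n z y x = -assocSgn n x y z := by
    unfold assocSgn
    rw [symmDiff_comm z y, symmDiff_comm y x, n1, n2, n3, n4]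
    ring
  rw [key, neg_eq_zero]

lemma assoc_smul₁ (ε : ℕ → ℝ) (n : ℕ) (r : ℝ) (x y z : CD n) :
    CD.assoc ε n (r • x) y z = r • CD.assoc ε n x y z := by
  unfold CD.assoc
  rw [mul_smul_left, mul_smul_left, mul_smul_left, smul_sub]

lemma assoc_smul₂ (ε : ℕ → ℝ) (n : ℕ) (r : ℝ) (x y z : CD n) :
    CD.assoc ε n x (r • y) z = r • CD.assoc ε n x y z := by
  unfold CD.assoc
  rw [mul_smul_right, mul_smul_left, mul_smul_left, mul_smul_right, smul_sub]

end CD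

open Finset
open scoped symmDiff

set_option maxHeartbeats 1000000 in
/-- (Associativity theorem.) For a triad `(b,c,d)` with
`a := (b·c)·d`, within each of the three groups of associators the members are
simultaneously zero or simultaneously nonzero. -/
theorem stmt5 (n : ℕ) (α β γ : Finset ℕ) (h : CD.IsTriad n α β γ)
    (b c d a : CD n) (hb : b = CD.basis n α) (hc : c = CD.basis n β)
    (hd : d = CD.basis n γ) (ha : a = CD.mul1 n (CD.mul1 n b c) d) :
    ((CD.assoc1 n b a c = 0 ↔ CD.assoc1 n b d c = 0) ∧
     (CD.assoc1 n b d c = 0 ↔ CD.assoc1 n a b d = 0) ∧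
     (CD.assoc1 n a b d = 0 ↔ CD.assoc1 n a c d = 0)) ∧
    ((CD.assoc1 n a b c = 0 ↔ CD.assoc1 n b c d = 0) ∧
     (CD.assoc1 n b c d = 0 ↔ CD.assoc1 n b a d = 0) ∧
     (CD.assoc1 n b a d = 0 ↔ CD.assoc1 n a d c = 0)) ∧
    ((CD.assoc1 n a c b = 0 ↔ CD.assoc1 n c b d = 0) ∧
     (CD.assoc1 n c b d = 0 ↔ CD.assoc1 n a d b = 0) ∧
     (CD.assoc1 n a d b = 0 ↔ CD.assoc1 n c a d = 0)) := by
  obtain ⟨⟨hαne, hαsub⟩, ⟨hβne, hβsub⟩, ⟨hγne, hγsub⟩, hαβ, hαγ, hβγ, h7, h8⟩ := h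
  have hα0 : α ≠ ∅ := Finset.nonempty_iff_ne_empty.1 hαne
  have hβ0 : β ≠ ∅ := Finset.nonempty_iff_ne_empty.1 hβne
  have hγ0 : γ ≠ ∅ := Finset.nonempty_iff_ne_empty.1 hγne
  set δ : Finset ℕ := (α ∆ β) ∆ γ with hδdef
  have hδsub : δ ⊆ Finset.Icc 1 n := CD.sd_subset (CD.sd_subset hαsub hβsub) hγsub
  have hbm := CD.basis_mul n α β hαsub hβsub
  have hγαβ : γ ≠ α ∆ β := by
    intro e
    rcases CD.sgn_eq_or n α β with hs | hs
    · apply h7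
      show CD.basis n γ = CD.mul (fun _ => (1:ℝ)) n (CD.basis n α) (CD.basis n β)
      rw [hbm, hs, one_smul, e]
    · apply h8
      show CD.basis n γ = -CD.mul (fun _ => (1:ℝ)) n (CD.basis n α) (CD.basis n β)
      rw [hbm, hs, e, neg_smul, one_smul, neg_neg]
  have hδ0 : δ ≠ ∅ := fun e => hγαβ (CD.eq_of_sd_empty e).symm
  have hδα : δ ≠ α := by
    intro e
    apply hβγ
    rw [hδdef] at e
    have he := Finset.ext_iff.1 e
    ext i
    have hi := he i
    simp only [Finset.mem_symmDiff] at hi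
    tauto
  have hδβ : δ ≠ β := by
    intro e
    apply hαγ
    rw [hδdef] at e
    have he := Finset.ext_iff.1 e
    ext i
    have hi := he i
    simp only [Finset.mem_symmDiff] at hi
    tauto
  have hδγ : δ ≠ γ := by
    intro e
    apply hαβ
    rw [hδdef] at e
    have he := Finset.ext_iff.1 e
    ext i
    have hi := he i
    simp only [Finset.mem_symmDiff] at hi
    tauto
  set r : ℝ := CD.sgn n α β * CD.sgn n (α ∆ β) γ with hrdef
  have hr0 : r ≠ 0 := mul_ne_zero (CD.sgn_ne_zero n α β) (CD.sgn_ne_zero n (α ∆ β) γ)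
  have ha' : a = r • CD.basis n δ := by
    rw [ha, hb, hc, hd]
    show CD.mul (fun _ => (1:ℝ)) n
      (CD.mul (fun _ => (1:ℝ)) n (CD.basis n α) (CD.basis n β)) (CD.basis n γ)
      = r • CD.basis n δ
    rw [hbm, CD.mul_smul_left, CD.basis_mul n _ γ (CD.sd_subset hαsub hβsub) hγsub,
      smul_smul, hδdef, hrdef]
  have AZ : ∀ x y z : Finset ℕ, x ⊆ Finset.Icc 1 n → y ⊆ Finset.Icc 1 n →
      z ⊆ Finset.Icc 1 n →
      (CD.assoc (fun _ => (1:ℝ)) n (CD.basis n x) (CD.basis n y) (CD.basis n z) = 0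
        ↔ CD.assocSgn n x y z = 0) :=
    fun x y z hx hy hz => CD.assoc_basis_zero_iff n x y z hx hy hz
  -- bridges
  have Bbac : (CD.assoc1 n b a c = 0) ↔ CD.assocSgn n α δ β = 0 := by
    rw [hb, hc, ha']
    unfold CD.assoc1
    rw [CD.assoc_smul₂, CD.smul_eq_zero_iff₀ hr0]
    exact AZ α δ β hαsub hδsub hβsub
  have Bbdc : (CD.assoc1 n b d c = 0) ↔ CD.assocSgn n α γ β = 0 := by
    rw [hb, hc, hd]
    exact AZ α γ β hαsub hγsub hβsub
  have Babd : (CD.assoc1 n a b d = 0) ↔ CD.assocSgn n δ α γ = 0 := by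
    rw [hb, hd, ha']
    unfold CD.assoc1
    rw [CD.assoc_smul₁, CD.smul_eq_zero_iff₀ hr0]
    exact AZ δ α γ hδsub hαsub hγsub
  have Bacd : (CD.assoc1 n a c d = 0) ↔ CD.assocSgn n δ β γ = 0 := by
    rw [hc, hd, ha']
    unfold CD.assoc1
    rw [CD.assoc_smul₁, CD.smul_eq_zero_iff₀ hr0]
    exact AZ δ β γ hδsub hβsub hγsub
  have Babc : (CD.assoc1 n a b c = 0) ↔ CD.assocSgn n δ α β = 0 := by
    rw [hb, hc, ha']
    unfold CD.assoc1
    rw [CD.assoc_smul₁, CD.smul_eq_zero_iff₀ hr0]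
    exact AZ δ α β hδsub hαsub hβsub
  have Bbcd : (CD.assoc1 n b c d = 0) ↔ CD.assocSgn n α β γ = 0 := by
    rw [hb, hc, hd]
    exact AZ α β γ hαsub hβsub hγsub
  have Bbad : (CD.assoc1 n b a d = 0) ↔ CD.assocSgn n α δ γ = 0 := by
    rw [hb, hd, ha']
    unfold CD.assoc1
    rw [CD.assoc_smul₂, CD.smul_eq_zero_iff₀ hr0]
    exact AZ α δ γ hαsub hδsub hγsub
  have Badc : (CD.assoc1 n a d c = 0) ↔ CD.assocSgn n δ γ β = 0 := by
    rw [hc, hd, ha']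
    unfold CD.assoc1
    rw [CD.assoc_smul₁, CD.smul_eq_zero_iff₀ hr0]
    exact AZ δ γ β hδsub hγsub hβsub
  have Bacb : (CD.assoc1 n a c b = 0) ↔ CD.assocSgn n δ β α = 0 := by
    rw [hb, hc, ha']
    unfold CD.assoc1
    rw [CD.assoc_smul₁, CD.smul_eq_zero_iff₀ hr0]
    exact AZ δ β α hδsub hβsub hαsub
  have Bcbd : (CD.assoc1 n c b d = 0) ↔ CD.assocSgn n β α γ = 0 := by
    rw [hb, hc, hd]
    exact AZ β α γ hβsub hαsub hγsub
  have Badb : (CD.assoc1 n a d b = 0) ↔ CD.assocSgn n δ γ α = 0 := by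
    rw [hb, hd, ha']
    unfold CD.assoc1
    rw [CD.assoc_smul₁, CD.smul_eq_zero_iff₀ hr0]
    exact AZ δ γ α hδsub hγsub hαsub
  have Bcad : (CD.assoc1 n c a d = 0) ↔ CD.assocSgn n β δ γ = 0 := by
    rw [hc, hd, ha']
    unfold CD.assoc1
    rw [CD.assoc_smul₂, CD.smul_eq_zero_iff₀ hr0]
    exact AZ β δ γ hβsub hδsub hγsub
  -- symmDiff identities
  have id1 : (α ∆ δ) ∆ β = γ := by
    rw [hδdef]
    ext i
    simp only [Finset.mem_symmDiff]
    by_cases h1 : i ∈ α <;> by_cases h2 : i ∈ β <;> by_cases h3 : i ∈ γ <;>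
      simp [h1, h2, h3]
  have id2 : (α ∆ γ) ∆ β = δ := by
    rw [hδdef]
    ext i
    simp only [Finset.mem_symmDiff]
    by_cases h1 : i ∈ α <;> by_cases h2 : i ∈ β <;> by_cases h3 : i ∈ γ <;>
      simp [h1, h2, h3]
  have id3 : (γ ∆ β) ∆ δ = α := by
    rw [hδdef]
    ext i
    simp only [Finset.mem_symmDiff]
    by_cases h1 : i ∈ α <;> by_cases h2 : i ∈ β <;> by_cases h3 : i ∈ γ <;>
      simp [h1, h2, h3]
  have id4 : (δ ∆ α) ∆ γ = β := by
    rw [hδdef]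
    ext i
    simp only [Finset.mem_symmDiff]
    by_cases h1 : i ∈ α <;> by_cases h2 : i ∈ β <;> by_cases h3 : i ∈ γ <;>
      simp [h1, h2, h3]
  have id5 : (δ ∆ α) ∆ β = γ := by
    rw [hδdef]
    ext i
    simp only [Finset.mem_symmDiff]
    by_cases h1 : i ∈ α <;> by_cases h2 : i ∈ β <;> by_cases h3 : i ∈ γ <;>
      simp [h1, h2, h3]
  have id6 : (α ∆ δ) ∆ γ = β := by
    rw [hδdef]
    ext i
    simp only [Finset.mem_symmDiff]
    by_cases h1 : i ∈ α <;> by_cases h2 : i ∈ β <;> by_cases h3 : i ∈ γ <;>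
      simp [h1, h2, h3]
  have id7 : (δ ∆ γ) ∆ β = α := by
    rw [hδdef]
    ext i
    simp only [Finset.mem_symmDiff]
    by_cases h1 : i ∈ α <;> by_cases h2 : i ∈ β <;> by_cases h3 : i ∈ γ <;>
      simp [h1, h2, h3]
  have id8 : (γ ∆ β) ∆ α = δ := by
    rw [hδdef]
    ext i
    simp only [Finset.mem_symmDiff]
    by_cases h1 : i ∈ α <;> by_cases h2 : i ∈ β <;> by_cases h3 : i ∈ γ <;>
      simp [h1, h2, h3]
  have id9 : (δ ∆ β) ∆ α = γ := by
    rw [hδdef]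
    ext i
    simp only [Finset.mem_symmDiff]
    by_cases h1 : i ∈ α <;> by_cases h2 : i ∈ β <;> by_cases h3 : i ∈ γ <;>
      simp [h1, h2, h3]
  have id10 : (δ ∆ γ) ∆ α = β := by
    rw [hδdef]
    ext i
    simp only [Finset.mem_symmDiff]
    by_cases h1 : i ∈ α <;> by_cases h2 : i ∈ β <;> by_cases h3 : i ∈ γ <;>
      simp [h1, h2, h3]
  have id11 : (γ ∆ α) ∆ β = δ := by
    rw [hδdef]
    ext i
    simp only [Finset.mem_symmDiff]
    by_cases h1 : i ∈ α <;> by_cases h2 : i ∈ β <;> by_cases h3 : i ∈ γ <;>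
      simp [h1, h2, h3]
  have id12 : (β ∆ δ) ∆ γ = α := by
    rw [hδdef]
    ext i
    simp only [Finset.mem_symmDiff]
    by_cases h1 : i ∈ α <;> by_cases h2 : i ∈ β <;> by_cases h3 : i ∈ γ <;>
      simp [h1, h2, h3]
  -- rotations and reversals
  have r1 := CD.assocSgn_rot hαsub hδsub hβsub hα0 hδ0 hβ0 hγ0 hδα.symm hδβ id1
  have r2 := CD.assocSgn_rot hαsub hγsub hβsub hα0 hγ0 hβ0 hδ0 hαγ hβγ.symm id2
  have r3 := CD.assocSgn_rev hγsub hβsub hδsub hγ0 hβ0 hδ0 hα0 hβγ.symm hδβ.symm id3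
  have r4 := CD.assocSgn_rot hδsub hαsub hγsub hδ0 hα0 hγ0 hβ0 hδα hαγ id4
  have r5 := CD.assocSgn_rot hδsub hαsub hβsub hδ0 hα0 hβ0 hγ0 hδα hαβ id5
  have r6 := CD.assocSgn_rot hαsub hδsub hγsub hα0 hδ0 hγ0 hβ0 hδα.symm hδγ id6
  have r7 := CD.assocSgn_rot hδsub hγsub hβsub hδ0 hγ0 hβ0 hα0 hδγ hβγ.symm id7
  have r8 := CD.assocSgn_rev hγsub hβsub hαsub hγ0 hβ0 hα0 hδ0 hβγ.symm hαβ.symm id8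
  have r9 := CD.assocSgn_rot hδsub hβsub hαsub hδ0 hβ0 hα0 hγ0 hδβ hαβ.symm id9
  have r10 := CD.assocSgn_rot hδsub hγsub hαsub hδ0 hγ0 hα0 hβ0 hδγ hαγ.symm id10
  have r11 := CD.assocSgn_rev hγsub hαsub hβsub hγ0 hα0 hβ0 hδ0 hαγ.symm hαβ id11
  have r12 := CD.assocSgn_rot hβsub hδsub hγsub hβ0 hδ0 hγ0 hα0 hδβ.symm hδγ id12
  have G1i1 : (CD.assocSgn n α δ β = 0) ↔ CD.assocSgn n α γ β = 0 :=
    r1.trans ((r2.trans r3).symm)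
  have G1i2 : (CD.assocSgn n α γ β = 0) ↔ CD.assocSgn n δ α γ = 0 := r4.symm
  have G1i3 : (CD.assocSgn n δ α γ = 0) ↔ CD.assocSgn n δ β γ = 0 :=
    r4.trans (r2.trans r3)
  have G2i1 : (CD.assocSgn n δ α β = 0) ↔ CD.assocSgn n α β γ = 0 := r5
  have G2i2 : (CD.assocSgn n α β γ = 0) ↔ CD.assocSgn n α δ γ = 0 :=
    (r6.trans (r7.trans r8)).symm
  have G2i3 : (CD.assocSgn n α δ γ = 0) ↔ CD.assocSgn n δ γ β = 0 := r6
  have G3i1 : (CD.assocSgn n δ β α = 0) ↔ CD.assocSgn n β α γ = 0 := r9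
  have G3i2 : (CD.assocSgn n β α γ = 0) ↔ CD.assocSgn n δ γ α = 0 :=
    (r10.trans r11).symm
  have G3i3 : (CD.assocSgn n δ γ α = 0) ↔ CD.assocSgn n β δ γ = 0 := r12.symm
  exact ⟨⟨Bbac.trans (G1i1.trans Bbdc.symm),
          Bbdc.trans (G1i2.trans Babd.symm),
          Babd.trans (G1i3.trans Bacd.symm)⟩,
         ⟨Babc.trans (G2i1.trans Bbcd.symm),
          Bbcd.trans (G2i2.trans Bbad.symm),
          Bbad.trans (G2i3.trans Badc.symm)⟩,
         ⟨Bacb.trans (G3i1.trans Bcbd.symm),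
          Bcbd.trans (G3i2.trans Badb.symm),
          Badb.trans (G3i3.trans Bcad.symm)⟩⟩
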